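/- Under the constraints θ_{0x} = 2πm + νπ, θ_{0y} = 2πt + (1-ν)π (ν ∈ {0,1}), with A_m = R_z(ζ'_m)R_y(θ_{0m})R_z(φ_m), the anticommutator of A = A_xA_y and B (as defined) equals -θ_{1y}(R_z(-2φ_y) + R_z(2ζ'_x + 2(-1)^ν φ_x + 2(-1)^ν ζ'_y))σ_y - θ_{1x}(R_z(2ζ'_x) + R_z(2(-1)^ν ζ'_y - 2φ_y + 2(-1)^ν φ_x))σ_y. -/

import Mathlib

open Matrix

noncomputable section

def σy : Matrix (Fin 2) (Fin 2) ℂ := !![0, -Complex.I; Complex.I, 0]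
def σz : Matrix (Fin 2) (Fin 2) ℂ := !![1, 0; 0, -1]
def Rz (α : ℝ) : Matrix (Fin 2) (Fin 2) ℂ := NormedSpace.exp ((-(Complex.I * (α : ℂ) / 2)) • σz)
def Ry (β : ℝ) : Matrix (Fin 2) (Fin 2) ℂ := NormedSpace.exp ((-(Complex.I * (β : ℂ) / 2)) • σy)

def Am (ζ θ φ : ℝ) : Matrix (Fin 2) (Fin 2) ℂ := Rz ζ * Ry θ * Rz φ

def Bm (ζ θ0 φ ζ1 θ1 φ1 : ℝ) : Matrix (Fin 2) (Fin 2) ℂ :=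
  (ζ1 : ℂ) • (σz * Am ζ θ0 φ) + (θ1 : ℂ) • (σy * Rz (-(2 * ζ)) * Am ζ θ0 φ) +
    (φ1 : ℂ) • (Am ζ θ0 φ * σz)

lemma Rz_eq (α : ℝ) : Rz α =
    !![Complex.exp (-(Complex.I * α / 2)), 0; 0, Complex.exp (Complex.I * α / 2)] := by
  have h : (-(Complex.I * (α : ℂ) / 2)) • σz
      = diagonal ![-(Complex.I * α / 2), Complex.I * α / 2] := by
    ext i j; fin_cases i <;> fin_cases j <;> simp [σz, diagonal]
  rw [Rz, h, Matrix.exp_diagonal]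
  ext i j
  fin_cases i <;> fin_cases j <;>
    simp [diagonal, Pi.exp_def, Complex.exp_eq_exp_ℂ]

def Vm : Matrix (Fin 2) (Fin 2) ℂ := !![1, 1; Complex.I, -Complex.I]
def Wm : Matrix (Fin 2) (Fin 2) ℂ := !![1/2, -Complex.I/2; 1/2, Complex.I/2]

lemma VW : Vm * Wm = 1 := by
  ext i j; fin_cases i <;> fin_cases j <;>
    simp [Vm, Wm, Matrix.mul_apply, Fin.sum_univ_two] <;> (try ring) <;>
      simp [Complex.I_sq]

lemma V_inv : Vm⁻¹ = Wm := Matrix.inv_eq_right_inv VW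

lemma V_unit : IsUnit Vm := by
  apply Matrix.isUnit_iff_isUnit_det _ |>.mpr
  simp [Vm, Matrix.det_fin_two_of]
  intro h
  exact Complex.I_ne_zero (by linear_combination -h/2)

lemma Ry_eq (β : ℝ) : Ry β =
    !![Complex.cos (β/2), -Complex.sin (β/2); Complex.sin (β/2), Complex.cos (β/2)] := by
  have h : (-(Complex.I * (β : ℂ) / 2)) • σy = Vm * ((-(Complex.I * (β : ℂ) / 2)) • σz) * Vm⁻¹ := by
    rw [V_inv]
    ext i j; fin_cases i <;> fin_cases j <;>
      simp [Vm, Wm, σy, σz, Matrix.mul_apply, Fin.sum_univ_two] <;> (try ring) <;>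
        (ring_nf; simp [Complex.I_sq]; try ring)
  rw [Ry, h, Matrix.exp_conj Vm _ V_unit, V_inv]
  have : NormedSpace.exp ((-(Complex.I * (β : ℂ) / 2)) • σz) = Rz β := rfl
  rw [this, Rz_eq]
  ext i j
  fin_cases i <;> fin_cases j <;>
    simp [Vm, Wm, Matrix.mul_apply, Fin.sum_univ_two, Complex.cos, Complex.sin] <;>
      ring_nf <;> simp [Complex.I_sq] <;> ring

def Jm : Matrix (Fin 2) (Fin 2) ℂ := !![0, -1; 1, 0]

lemma cos_int_pi (k : ℤ) : Real.cos (k * Real.pi) = (-1) ^ k := by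
  simpa using Real.cos_int_mul_pi_sub 0 k

lemma sin_int_pi (k : ℤ) : Real.sin (k * Real.pi) = 0 := Real.sin_int_mul_pi k

lemma Ry_even (k : ℤ) : Ry (2 * Real.pi * k) = ((-1 : ℂ) ^ k) • 1 := by
  have h1 : 2 * (Real.pi : ℂ) * (k : ℂ) / 2 = ((k * Real.pi : ℝ) : ℂ) := by push_cast; ring
  have hc : Complex.cos (2 * (Real.pi : ℂ) * (k : ℂ) / 2) = (-1) ^ k := by
    rw [h1, ← Complex.ofReal_cos, cos_int_pi]; push_cast; ring
  have hs : Complex.sin (2 * (Real.pi : ℂ) * (k : ℂ) / 2) = 0 := by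
    rw [h1, ← Complex.ofReal_sin, sin_int_pi]; norm_num
  rw [Ry_eq]
  ext i j; fin_cases i <;> fin_cases j <;> simp [hc, hs]

lemma Ry_odd (k : ℤ) : Ry (2 * Real.pi * k + Real.pi) = ((-1 : ℂ) ^ k) • Jm := by
  have h1 : (2 * (Real.pi : ℂ) * (k : ℂ) + Real.pi) / 2 = ((k * Real.pi + Real.pi / 2 : ℝ) : ℂ) := by
    push_cast; ring
  have hcr : Real.cos (k * Real.pi + Real.pi / 2) = 0 := by
    rw [Real.cos_add, Real.cos_pi_div_two, Real.sin_pi_div_two, sin_int_pi]; ring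
  have hsr : Real.sin (k * Real.pi + Real.pi / 2) = (-1) ^ k := by
    rw [Real.sin_add, Real.cos_pi_div_two, Real.sin_pi_div_two, sin_int_pi, cos_int_pi]; ring
  have hc : Complex.cos ((2 * (Real.pi : ℂ) * (k : ℂ) + Real.pi) / 2) = 0 := by
    rw [h1, ← Complex.ofReal_cos, hcr]; norm_num
  have hs : Complex.sin ((2 * (Real.pi : ℂ) * (k : ℂ) + Real.pi) / 2) = (-1) ^ k := by
    rw [h1, ← Complex.ofReal_sin, hsr]; push_cast; ring
  rw [Ry_eq]
  ext i j; fin_cases i <;> fin_cases j <;> simp [Jm, hc, hs]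

set_option maxHeartbeats 3200000 in
lemma core0 (ζx ζy φx φy ζ1x ζ1y θ1x θ1y φ1x φ1y : ℝ)
    (Ax Ay Bx By : Matrix (Fin 2) (Fin 2) ℂ)
    (hAx : Ax = Rz ζx * Rz φx)
    (hAy : Ay = Rz ζy * Jm * Rz φy)
    (hBx : Bx = (ζ1x:ℂ)•(σz*Ax) + (θ1x:ℂ)•(σy*Rz (-(2*ζx))*Ax) + (φ1x:ℂ)•(Ax*σz))
    (hBy : By = (ζ1y:ℂ)•(σz*Ay) + (θ1y:ℂ)•(σy*Rz (-(2*ζy))*Ay) + (φ1y:ℂ)•(Ay*σz)) :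
    Ax*Ay*(Ax*By+Bx*Ay) + (Ax*By+Bx*Ay)*(Ax*Ay)
    = -((θ1y:ℂ) • ((Rz (-(2*φy)) + Rz (2*ζx + 2*φx + 2*ζy)) * σy))
      - (θ1x:ℂ) • ((Rz (2*ζx) + Rz (2*ζy - 2*φy + 2*φx)) * σy) := by
  subst hBx hBy hAx hAy
  ext i j
  fin_cases i <;> fin_cases j <;>
  · simp [Rz_eq, Jm, σy, σz, Matrix.mul_apply, Fin.sum_univ_two, ← Complex.exp_add]
    ring_nf
    simp only [mul_comm, mul_left_comm, mul_assoc, ← Complex.exp_add, Complex.exp_zero]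
    ring_nf

set_option maxHeartbeats 3200000 in
lemma core1 (ζx ζy φx φy ζ1x ζ1y θ1x θ1y φ1x φ1y : ℝ)
    (Ax Ay Bx By : Matrix (Fin 2) (Fin 2) ℂ)
    (hAx : Ax = Rz ζx * Jm * Rz φx)
    (hAy : Ay = Rz ζy * Rz φy)
    (hBx : Bx = (ζ1x:ℂ)•(σz*Ax) + (θ1x:ℂ)•(σy*Rz (-(2*ζx))*Ax) + (φ1x:ℂ)•(Ax*σz))
    (hBy : By = (ζ1y:ℂ)•(σz*Ay) + (θ1y:ℂ)•(σy*Rz (-(2*ζy))*Ay) + (φ1y:ℂ)•(Ay*σz)) :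
    Ax*Ay*(Ax*By+Bx*Ay) + (Ax*By+Bx*Ay)*(Ax*Ay)
    = -((θ1y:ℂ) • ((Rz (-(2*φy)) + Rz (2*ζx - 2*φx - 2*ζy)) * σy))
      - (θ1x:ℂ) • ((Rz (2*ζx) + Rz (-(2*ζy) - 2*φy - 2*φx)) * σy) := by
  subst hBx hBy hAx hAy
  ext i j
  fin_cases i <;> fin_cases j <;>
  · simp [Rz_eq, Jm, σy, σz, Matrix.mul_apply, Fin.sum_univ_two, ← Complex.exp_add]
    ring_nf
    simp only [mul_comm, mul_left_comm, mul_assoc, ← Complex.exp_add, Complex.exp_zero]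
    ring_nf

lemma neg_one_sq_zpow (k : ℤ) : ((-1 : ℂ) ^ k) * ((-1 : ℂ) ^ k) = 1 := by
  rw [← zpow_add₀ (by norm_num : (-1:ℂ) ≠ 0)]
  exact Even.neg_one_zpow ⟨k, rfl⟩

theorem stmt_13 (ν : ℕ) (hν : ν = 0 ∨ ν = 1) (m t : ℤ)
    (θ0x θ0y ζx ζy φx φy ζ1x ζ1y θ1x θ1y φ1x φ1y : ℝ)
    (hθx : θ0x = 2 * Real.pi * m + ν * Real.pi)
    (hθy : θ0y = 2 * Real.pi * t + (1 - (ν : ℝ)) * Real.pi) :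
    (Am ζx θ0x φx * Am ζy θ0y φy) *
        (Am ζx θ0x φx * Bm ζy θ0y φy ζ1y θ1y φ1y + Bm ζx θ0x φx ζ1x θ1x φ1x * Am ζy θ0y φy) +
      (Am ζx θ0x φx * Bm ζy θ0y φy ζ1y θ1y φ1y + Bm ζx θ0x φx ζ1x θ1x φ1x * Am ζy θ0y φy) *
        (Am ζx θ0x φx * Am ζy θ0y φy)
    = -((θ1y : ℂ) • ((Rz (-(2 * φy)) +
          Rz (2 * ζx + 2 * (-1 : ℝ) ^ ν * φx + 2 * (-1 : ℝ) ^ ν * ζy)) * σy))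
      - (θ1x : ℂ) • ((Rz (2 * ζx) +
          Rz (2 * (-1 : ℝ) ^ ν * ζy - 2 * φy + 2 * (-1 : ℝ) ^ ν * φx)) * σy) := by
  rcases hν with rfl | rfl
  · -- ν = 0 : θ0x even, θ0y odd
    have hRx : Ry θ0x = ((-1 : ℂ) ^ m) • 1 := by
      rw [hθx, show 2 * Real.pi * (m:ℝ) + ((0:ℕ):ℝ) * Real.pi = 2 * Real.pi * (m:ℝ) by
        push_cast; ring, Ry_even]
    have hRy : Ry θ0y = ((-1 : ℂ) ^ t) • Jm := by
      rw [hθy, show 2 * Real.pi * (t:ℝ) + (1 - ((0:ℕ):ℝ)) * Real.pi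
          = 2 * Real.pi * (t:ℝ) + Real.pi by push_cast; ring, Ry_odd]
    have hAx : Am ζx θ0x φx = ((-1 : ℂ) ^ m) • (Rz ζx * Rz φx) := by
      rw [Am, hRx]; simp [mul_smul_comm, smul_mul_assoc]
    have hAy : Am ζy θ0y φy = ((-1 : ℂ) ^ t) • (Rz ζy * Jm * Rz φy) := by
      rw [Am, hRy]; simp [mul_smul_comm, smul_mul_assoc, Matrix.mul_assoc]
    have hBx : Bm ζx θ0x φx ζ1x θ1x φ1x = ((-1 : ℂ) ^ m) •
        ((ζ1x:ℂ)•(σz*(Rz ζx * Rz φx)) + (θ1x:ℂ)•(σy*Rz (-(2*ζx))*(Rz ζx * Rz φx)) +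
          (φ1x:ℂ)•((Rz ζx * Rz φx)*σz)) := by
      rw [Bm, hAx]
      simp only [mul_smul_comm, smul_mul_assoc, smul_smul, smul_add]
      module
    have hBy : Bm ζy θ0y φy ζ1y θ1y φ1y = ((-1 : ℂ) ^ t) •
        ((ζ1y:ℂ)•(σz*(Rz ζy * Jm * Rz φy)) + (θ1y:ℂ)•(σy*Rz (-(2*ζy))*(Rz ζy * Jm * Rz φy)) +
          (φ1y:ℂ)•((Rz ζy * Jm * Rz φy)*σz)) := by
      rw [Bm, hAy]
      simp only [mul_smul_comm, smul_mul_assoc, smul_smul, smul_add]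
      module
    have key := core0 ζx ζy φx φy ζ1x ζ1y θ1x θ1y φ1x φ1y _ _ _ _ rfl rfl rfl rfl
    rw [hAx, hAy, hBx, hBy]
    simp only [smul_mul_smul_comm, ← smul_add, smul_smul]
    rw [show ((-1:ℂ)^m * (-1:ℂ)^t * ((-1:ℂ)^m * (-1:ℂ)^t)) = 1 by
      rw [mul_mul_mul_comm, neg_one_sq_zpow, neg_one_sq_zpow, one_mul], one_smul]
    rw [show (2 * ζx + 2 * (-1 : ℝ) ^ (0:ℕ) * φx + 2 * (-1 : ℝ) ^ (0:ℕ) * ζy)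
        = 2*ζx + 2*φx + 2*ζy by ring]
    rw [show (2 * (-1 : ℝ) ^ (0:ℕ) * ζy - 2 * φy + 2 * (-1 : ℝ) ^ (0:ℕ) * φx)
        = 2*ζy - 2*φy + 2*φx by ring]
    exact key
  · -- ν = 1 : θ0x odd, θ0y even
    have hRx : Ry θ0x = ((-1 : ℂ) ^ m) • Jm := by
      rw [hθx, show 2 * Real.pi * (m:ℝ) + ((1:ℕ):ℝ) * Real.pi
          = 2 * Real.pi * (m:ℝ) + Real.pi by push_cast; ring, Ry_odd]
    have hRy : Ry θ0y = ((-1 : ℂ) ^ t) • 1 := by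
      rw [hθy, show 2 * Real.pi * (t:ℝ) + (1 - ((1:ℕ):ℝ)) * Real.pi
          = 2 * Real.pi * (t:ℝ) by push_cast; ring, Ry_even]
    have hAx : Am ζx θ0x φx = ((-1 : ℂ) ^ m) • (Rz ζx * Jm * Rz φx) := by
      rw [Am, hRx]; simp [mul_smul_comm, smul_mul_assoc, Matrix.mul_assoc]
    have hAy : Am ζy θ0y φy = ((-1 : ℂ) ^ t) • (Rz ζy * Rz φy) := by
      rw [Am, hRy]; simp [mul_smul_comm, smul_mul_assoc]
    have hBx : Bm ζx θ0x φx ζ1x θ1x φ1x = ((-1 : ℂ) ^ m) •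
        ((ζ1x:ℂ)•(σz*(Rz ζx * Jm * Rz φx)) + (θ1x:ℂ)•(σy*Rz (-(2*ζx))*(Rz ζx * Jm * Rz φx)) +
          (φ1x:ℂ)•((Rz ζx * Jm * Rz φx)*σz)) := by
      rw [Bm, hAx]
      simp only [mul_smul_comm, smul_mul_assoc, smul_smul, smul_add]
      module
    have hBy : Bm ζy θ0y φy ζ1y θ1y φ1y = ((-1 : ℂ) ^ t) •
        ((ζ1y:ℂ)•(σz*(Rz ζy * Rz φy)) + (θ1y:ℂ)•(σy*Rz (-(2*ζy))*(Rz ζy * Rz φy)) +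
          (φ1y:ℂ)•((Rz ζy * Rz φy)*σz)) := by
      rw [Bm, hAy]
      simp only [mul_smul_comm, smul_mul_assoc, smul_smul, smul_add]
      module
    have key := core1 ζx ζy φx φy ζ1x ζ1y θ1x θ1y φ1x φ1y _ _ _ _ rfl rfl rfl rfl
    rw [hAx, hAy, hBx, hBy]
    simp only [smul_mul_smul_comm, ← smul_add, smul_smul]
    rw [show ((-1:ℂ)^m * (-1:ℂ)^t * ((-1:ℂ)^m * (-1:ℂ)^t)) = 1 by
      rw [mul_mul_mul_comm, neg_one_sq_zpow, neg_one_sq_zpow, one_mul], one_smul]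
    rw [show (2 * ζx + 2 * (-1 : ℝ) ^ (1:ℕ) * φx + 2 * (-1 : ℝ) ^ (1:ℕ) * ζy)
        = 2*ζx - 2*φx - 2*ζy by ring]
    rw [show (2 * (-1 : ℝ) ^ (1:ℕ) * ζy - 2 * φy + 2 * (-1 : ℝ) ^ (1:ℕ) * φx)
        = -(2*ζy) - 2*φy - 2*φx by ring]
    exact key
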